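/- McSplit-style bound refinement under label-class partitioning: let G₁, G₂ be finite labelled graphs, M a partial common induced subgraph mapping, and extend M by one pair (a, b) in the same label class. Then each label class l of M splits into at most two label classes of M ∪ {(a,b)} (vertices adjacent to a resp. b, and vertices not adjacent), and the bound |M∪{(a,b)}| + Σ_l' min(|l' ∩ V₁|, |l' ∩ V₂|) over the refined classes is at most 1 + the bound |M| + Σ_l min(|l ∩ V₁|, |l ∩ V₂|) over the original classes. -/
import Mathlib


/-- `M` is a common induced (label-preserving) subgraph mapping between vertex-labelled
graphs `G₁` and `G₂`: a set of pairs that is injective in both coordinates (a partial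
injective function), preserves labels, and preserves and reflects adjacency. -/
def IsCISMap {α β : Type} (G₁ : SimpleGraph α) (G₂ : SimpleGraph β)
    (L₁ : α → ℕ) (L₂ : β → ℕ) (M : Finset (α × β)) : Prop :=
  (∀ p ∈ M, ∀ q ∈ M, (p.1 = q.1 ↔ p.2 = q.2)) ∧
  (∀ p ∈ M, L₁ p.1 = L₂ p.2) ∧
  (∀ p ∈ M, ∀ q ∈ M, (G₁.Adj p.1 q.1 ↔ G₂.Adj p.2 q.2))

/-- The McSplit label-class *signature* of an unmatched vertex `u` of `G₁` with respect
to the partial mapping `M`: its label together with its adjacency pattern to the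
matched pairs. Two unmatched vertices `u ∈ V₁` and `v ∈ V₂` lie in the same label
class iff their signatures coincide. -/
def sigA {α β : Type} [DecidableEq α] [DecidableEq β]
    (G₁ : SimpleGraph α) [DecidableRel G₁.Adj] (L₁ : α → ℕ)
    (M : Finset (α × β)) (u : α) : ℕ × (α × β → Bool) :=
  (L₁ u, fun p => decide (p ∈ M ∧ G₁.Adj u p.1))

/-- The signature of an unmatched vertex `v` of `G₂` with respect to `M`. -/
def sigB {α β : Type} [DecidableEq α] [DecidableEq β]
    (G₂ : SimpleGraph β) [DecidableRel G₂.Adj] (L₂ : β → ℕ)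
    (M : Finset (α × β)) (v : β) : ℕ × (α × β → Bool) :=
  (L₂ v, fun p => decide (p ∈ M ∧ G₂.Adj v p.2))

/-- The McSplit upper bound for the partial mapping `M`:
`|M| + Σ over label classes l of min(|l ∩ V₁|, |l ∩ V₂|)`, where the label classes
partition the unmatched vertices by signature. -/
def mcsplitBound {α β : Type} [Fintype α] [Fintype β] [DecidableEq α] [DecidableEq β]
    (G₁ : SimpleGraph α) (G₂ : SimpleGraph β)
    [DecidableRel G₁.Adj] [DecidableRel G₂.Adj]
    (L₁ : α → ℕ) (L₂ : β → ℕ) (M : Finset (α × β)) : ℕ :=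
  M.card +
    ∑ s ∈ ((Finset.univ.filter fun u : α => ∀ p ∈ M, p.1 ≠ u).image (sigA G₁ L₁ M)
          ∪ (Finset.univ.filter fun v : β => ∀ p ∈ M, p.2 ≠ v).image (sigB G₂ L₂ M)),
      min ((Finset.univ.filter fun u : α =>
              (∀ p ∈ M, p.1 ≠ u) ∧ sigA G₁ L₁ M u = s).card)
          ((Finset.univ.filter fun v : β =>
              (∀ p ∈ M, p.2 ≠ v) ∧ sigB G₂ L₂ M v = s).card)


/-- Abstract splitting lemma: if every refined class maps to a parent class with at
most two children and the per-parent contributions dominate, the refined sum is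
bounded by the original sum. -/
private lemma sum_refine {γ : Type*} [DecidableEq γ] {S' S : Finset γ} {f' f : γ → ℕ}
    (G : γ → γ) (F : γ → Bool → γ)
    (h1 : ∀ s' ∈ S', G s' ∈ S)
    (h2 : ∀ s' ∈ S', s' = F (G s') true ∨ s' = F (G s') false)
    (h3 : ∀ s ∈ S, F s true ≠ F s false)
    (h4 : ∀ s ∈ S, f' (F s true) + f' (F s false) ≤ f s) :
    ∑ s' ∈ S', f' s' ≤ ∑ s ∈ S, f s := by
  have himg : S'.image G ⊆ S := by
    intro s hs
    obtain ⟨s', hs', rfl⟩ := Finset.mem_image.mp hs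
    exact h1 s' hs'
  rw [← Finset.sum_fiberwise_of_maps_to (g := G) (t := S'.image G)
      (fun x hx => Finset.mem_image_of_mem G hx) f']
  refine le_trans (Finset.sum_le_sum ?_) (Finset.sum_le_sum_of_subset himg)
  intro s hs
  have hsS := himg hs
  have hsub : S'.filter (fun x => G x = s) ⊆ ({F s true, F s false} : Finset γ) := by
    intro x hx
    rw [Finset.mem_filter] at hx
    rcases h2 x hx.1 with h | h
    · rw [Finset.mem_insert]; left; rw [h, hx.2]
    · rw [Finset.mem_insert, Finset.mem_singleton]; right; rw [h, hx.2]
  calc ∑ x ∈ S'.filter (fun x => G x = s), f' x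
      ≤ ∑ x ∈ ({F s true, F s false} : Finset γ), f' x :=
        Finset.sum_le_sum_of_subset hsub
    _ = f' (F s true) + f' (F s false) := Finset.sum_pair (h3 s hsS)
    _ ≤ f s := h4 s hsS

private lemma min_add_min_le {x₁ x₂ y₁ y₂ X Y : ℕ} (hx : x₁ + x₂ ≤ X) (hy : y₁ + y₂ ≤ Y) :
    min x₁ y₁ + min x₂ y₂ ≤ min X Y := by omega

/-- McSplit-style bound refinement under label-class partitioning:
if the partial common induced subgraph mapping `M` is extended by one pair `(a, b)`
lying in the same label class (same label and identical adjacency pattern to the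
matched pairs), then (i) each label class of `M` splits into at most two label classes
of `M ∪ {(a, b)}`, and (ii) the refined bound is at most `1 +` the original bound. -/
theorem mcsplit_bound_refinement {α β : Type} [Fintype α] [Fintype β]
    [DecidableEq α] [DecidableEq β]
    (G₁ : SimpleGraph α) (G₂ : SimpleGraph β)
    [DecidableRel G₁.Adj] [DecidableRel G₂.Adj]
    (L₁ : α → ℕ) (L₂ : β → ℕ)
    (M : Finset (α × β)) (hM : IsCISMap G₁ G₂ L₁ L₂ M)
    (a : α) (b : β) (ha : ∀ p ∈ M, p.1 ≠ a) (hb : ∀ p ∈ M, p.2 ≠ b)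
    (hlabel : L₁ a = L₂ b)
    (hclass : ∀ p ∈ M, (G₁.Adj a p.1 ↔ G₂.Adj b p.2)) :
    (∀ s : ℕ × (α × β → Bool),
      (((Finset.univ.filter fun u : α =>
            (∀ p ∈ insert (a, b) M, p.1 ≠ u) ∧ sigA G₁ L₁ M u = s).image
          (sigA G₁ L₁ (insert (a, b) M)))
        ∪ ((Finset.univ.filter fun v : β =>
            (∀ p ∈ insert (a, b) M, p.2 ≠ v) ∧ sigB G₂ L₂ M v = s).image
          (sigB G₂ L₂ (insert (a, b) M)))).card ≤ 2) ∧
    mcsplitBound G₁ G₂ L₁ L₂ (insert (a, b) M) ≤ 1 + mcsplitBound G₁ G₂ L₁ L₂ M := by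
  classical
  have hab : (a, b) ∉ M := fun h => ha _ h rfl
  set Fn : (ℕ × (α × β → Bool)) → Bool → ℕ × (α × β → Bool) :=
    fun s c => (s.1, Function.update s.2 (a, b) c) with hFn
  set Gn : (ℕ × (α × β → Bool)) → ℕ × (α × β → Bool) :=
    fun s => (s.1, Function.update s.2 (a, b) false) with hGn
  have hA : ∀ u : α, sigA G₁ L₁ (insert (a, b) M) u
      = Fn (sigA G₁ L₁ M u) (decide (G₁.Adj u a)) := by
    intro u
    simp only [hFn, sigA]
    congr 1
    funext p
    by_cases hp : p = (a, b)
    · subst hp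
      simp [Function.update_self]
    · simp [Function.update_of_ne hp, Finset.mem_insert, hp]
  have hB : ∀ v : β, sigB G₂ L₂ (insert (a, b) M) v
      = Fn (sigB G₂ L₂ M v) (decide (G₂.Adj v b)) := by
    intro v
    simp only [hFn, sigB]
    congr 1
    funext p
    by_cases hp : p = (a, b)
    · subst hp
      simp [Function.update_self]
    · simp [Function.update_of_ne hp, Finset.mem_insert, hp]
  have sA0 : ∀ u : α, (sigA G₁ L₁ M u).2 (a, b) = false := by
    intro u; simp [sigA, hab]
  have sB0 : ∀ v : β, (sigB G₂ L₂ M v).2 (a, b) = false := by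
    intro v; simp [sigB, hab]
  have hGF : ∀ s c, s.2 (a, b) = false → Gn (Fn s c) = s := by
    intro s c hs
    have h2 : Function.update (Function.update s.2 (a, b) c) (a, b) false = s.2 := by
      funext p
      by_cases hp : p = (a, b)
      · subst hp; simp [Function.update_self, hs]
      · simp [Function.update_of_ne hp]
    simp only [hFn, hGn]
    rw [h2]
  have hFne : ∀ s, Fn s true ≠ Fn s false := by
    intro s h
    have h2 := congrArg (fun t => t.2 (a, b)) h
    simp [hFn, Function.update_self] at h2
  constructor
  · intro s
    have hsub : (((Finset.univ.filter fun u : α =>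
            (∀ p ∈ insert (a, b) M, p.1 ≠ u) ∧ sigA G₁ L₁ M u = s).image
          (sigA G₁ L₁ (insert (a, b) M)))
        ∪ ((Finset.univ.filter fun v : β =>
            (∀ p ∈ insert (a, b) M, p.2 ≠ v) ∧ sigB G₂ L₂ M v = s).image
          (sigB G₂ L₂ (insert (a, b) M))))
        ⊆ ({Fn s true, Fn s false} : Finset _) := by
      intro x hx
      rw [Finset.mem_union] at hx
      rcases hx with hx | hx
      · obtain ⟨u, hu, rfl⟩ := Finset.mem_image.mp hx
        rw [Finset.mem_filter] at hu
        rw [hA u, hu.2.2]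
        rcases Bool.eq_false_or_eq_true (decide (G₁.Adj u a)) with h | h <;> rw [h] <;> simp
      · obtain ⟨v, hv, rfl⟩ := Finset.mem_image.mp hx
        rw [Finset.mem_filter] at hv
        rw [hB v, hv.2.2]
        rcases Bool.eq_false_or_eq_true (decide (G₂.Adj v b)) with h | h <;> rw [h] <;> simp
    calc _ ≤ ({Fn s true, Fn s false} : Finset _).card := Finset.card_le_card hsub
      _ ≤ 2 := le_trans (Finset.card_insert_le _ _) (by simp)
  · unfold mcsplitBound
    rw [Finset.card_insert_of_notMem hab]
    have harith : ∀ x y : ℕ, x ≤ y → M.card + 1 + x ≤ 1 + (M.card + y) := by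
      intro x y h; omega
    apply harith
    apply sum_refine Gn Fn
    · -- h1 : parents of refined classes are original classes
      intro s' hs'
      rw [Finset.mem_union] at hs' ⊢
      rcases hs' with h | h
      · left
        obtain ⟨u, hu, rfl⟩ := Finset.mem_image.mp h
        rw [Finset.mem_filter] at hu
        have hun : ∀ p ∈ M, p.1 ≠ u := fun p hp => hu.2 p (Finset.mem_insert_of_mem hp)
        have hg : Gn (sigA G₁ L₁ (insert (a, b) M) u) = sigA G₁ L₁ M u := by
          rw [hA u]; exact hGF _ _ (sA0 u)
        rw [hg]
        exact Finset.mem_image_of_mem _ (Finset.mem_filter.mpr ⟨Finset.mem_univ _, hun⟩)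
      · right
        obtain ⟨v, hv, rfl⟩ := Finset.mem_image.mp h
        rw [Finset.mem_filter] at hv
        have hvn : ∀ p ∈ M, p.2 ≠ v := fun p hp => hv.2 p (Finset.mem_insert_of_mem hp)
        have hg : Gn (sigB G₂ L₂ (insert (a, b) M) v) = sigB G₂ L₂ M v := by
          rw [hB v]; exact hGF _ _ (sB0 v)
        rw [hg]
        exact Finset.mem_image_of_mem _ (Finset.mem_filter.mpr ⟨Finset.mem_univ _, hvn⟩)
    · -- h2 : each refined class is one of the two children of its parent
      intro s' hs'
      rw [Finset.mem_union] at hs'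
      rcases hs' with h | h
      · obtain ⟨u, hu, rfl⟩ := Finset.mem_image.mp h
        have hg : Gn (sigA G₁ L₁ (insert (a, b) M) u) = sigA G₁ L₁ M u := by
          rw [hA u]; exact hGF _ _ (sA0 u)
        rw [hg, hA u]
        rcases Bool.eq_false_or_eq_true (decide (G₁.Adj u a)) with hc | hc <;> rw [hc]
        · left; rfl
        · right; rfl
      · obtain ⟨v, hv, rfl⟩ := Finset.mem_image.mp h
        have hg : Gn (sigB G₂ L₂ (insert (a, b) M) v) = sigB G₂ L₂ M v := by
          rw [hB v]; exact hGF _ _ (sB0 v)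
        rw [hg, hB v]
        rcases Bool.eq_false_or_eq_true (decide (G₂.Adj v b)) with hc | hc <;> rw [hc]
        · left; rfl
        · right; rfl
    · -- h3
      intro s _
      exact hFne s
    · -- h4 : the two children together contribute at most the parent
      intro s hs
      have hs0 : s.2 (a, b) = false := by
        rw [Finset.mem_union] at hs
        rcases hs with h | h
        · obtain ⟨u, _, rfl⟩ := Finset.mem_image.mp h; exact sA0 u
        · obtain ⟨v, _, rfl⟩ := Finset.mem_image.mp h; exact sB0 v
      have hAmem : ∀ c : Bool, ∀ u : α, (∀ p ∈ insert (a, b) M, p.1 ≠ u) →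
          sigA G₁ L₁ (insert (a, b) M) u = Fn s c →
          (∀ p ∈ M, p.1 ≠ u) ∧ sigA G₁ L₁ M u = s := by
        intro c u hun hsig
        refine ⟨fun p hp => hun p (Finset.mem_insert_of_mem hp), ?_⟩
        have e := hGF (sigA G₁ L₁ M u) (decide (G₁.Adj u a)) (sA0 u)
        rw [← hA u, hsig, hGF s c hs0] at e
        exact e.symm
      have hBmem : ∀ c : Bool, ∀ v : β, (∀ p ∈ insert (a, b) M, p.2 ≠ v) →
          sigB G₂ L₂ (insert (a, b) M) v = Fn s c →
          (∀ p ∈ M, p.2 ≠ v) ∧ sigB G₂ L₂ M v = s := by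
        intro c v hvn hsig
        refine ⟨fun p hp => hvn p (Finset.mem_insert_of_mem hp), ?_⟩
        have e := hGF (sigB G₂ L₂ M v) (decide (G₂.Adj v b)) (sB0 v)
        rw [← hB v, hsig, hGF s c hs0] at e
        exact e.symm
      have hAcard :
          (Finset.univ.filter fun u : α => (∀ p ∈ insert (a, b) M, p.1 ≠ u) ∧
              sigA G₁ L₁ (insert (a, b) M) u = Fn s true).card
          + (Finset.univ.filter fun u : α => (∀ p ∈ insert (a, b) M, p.1 ≠ u) ∧
              sigA G₁ L₁ (insert (a, b) M) u = Fn s false).card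
          ≤ (Finset.univ.filter fun u : α =>
              (∀ p ∈ M, p.1 ≠ u) ∧ sigA G₁ L₁ M u = s).card := by
        have hdisj : Disjoint
            (Finset.univ.filter fun u : α => (∀ p ∈ insert (a, b) M, p.1 ≠ u) ∧
              sigA G₁ L₁ (insert (a, b) M) u = Fn s true)
            (Finset.univ.filter fun u : α => (∀ p ∈ insert (a, b) M, p.1 ≠ u) ∧
              sigA G₁ L₁ (insert (a, b) M) u = Fn s false) := by
          rw [Finset.disjoint_left]
          intro u h1 h2
          rw [Finset.mem_filter] at h1 h2
          exact hFne s (h1.2.2.symm.trans h2.2.2)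
        rw [← Finset.card_union_of_disjoint hdisj]
        apply Finset.card_le_card
        intro u hu
        rw [Finset.mem_union, Finset.mem_filter, Finset.mem_filter] at hu
        rw [Finset.mem_filter]
        rcases hu with hu | hu
        · exact ⟨Finset.mem_univ _, hAmem true u hu.2.1 hu.2.2⟩
        · exact ⟨Finset.mem_univ _, hAmem false u hu.2.1 hu.2.2⟩
      have hBcard :
          (Finset.univ.filter fun v : β => (∀ p ∈ insert (a, b) M, p.2 ≠ v) ∧
              sigB G₂ L₂ (insert (a, b) M) v = Fn s true).card
          + (Finset.univ.filter fun v : β => (∀ p ∈ insert (a, b) M, p.2 ≠ v) ∧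
              sigB G₂ L₂ (insert (a, b) M) v = Fn s false).card
          ≤ (Finset.univ.filter fun v : β =>
              (∀ p ∈ M, p.2 ≠ v) ∧ sigB G₂ L₂ M v = s).card := by
        have hdisj : Disjoint
            (Finset.univ.filter fun v : β => (∀ p ∈ insert (a, b) M, p.2 ≠ v) ∧
              sigB G₂ L₂ (insert (a, b) M) v = Fn s true)
            (Finset.univ.filter fun v : β => (∀ p ∈ insert (a, b) M, p.2 ≠ v) ∧
              sigB G₂ L₂ (insert (a, b) M) v = Fn s false) := by
          rw [Finset.disjoint_left]
          intro v h1 h2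
          rw [Finset.mem_filter] at h1 h2
          exact hFne s (h1.2.2.symm.trans h2.2.2)
        rw [← Finset.card_union_of_disjoint hdisj]
        apply Finset.card_le_card
        intro v hv
        rw [Finset.mem_union, Finset.mem_filter, Finset.mem_filter] at hv
        rw [Finset.mem_filter]
        rcases hv with hv | hv
        · exact ⟨Finset.mem_univ _, hBmem true v hv.2.1 hv.2.2⟩
        · exact ⟨Finset.mem_univ _, hBmem false v hv.2.1 hv.2.2⟩
      exact min_add_min_le hAcard hBcard
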